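/- Let d, n ∈ ℕ and let x_1(0), …, x_n(0) ∈ ℝ^d. Suppose v ∈ ℝ^d satisfies ⟨v, x_i(0)⟩ ≠ 0 for all i ∈ {1,…,n}, and that there exist unique indices M and m such that ⟨v, x_M(0)⟩ > ⟨v, x_j(0)⟩ for all j ≠ M and ⟨v, x_m(0)⟩ < ⟨v, x_j(0)⟩ for all j ≠ m. Let γ ∈ (0,1) and consider the hardmax self-attention dynamics with parameter matrix A = v vᵀ. Then for every k ≥ 0 and every i ∈ {1,…,n}: if ⟨v, x_i(0)⟩ > 0 then 0 < ⟨v, x_i(k)⟩ ≤ ⟨v, x_M(0)⟩ and C_i(X(k), v vᵀ) = {M}; and if ⟨v, x_i(0)⟩ < 0 then ⟨v, x_m(0)⟩ ≤ ⟨v, x_i(k)⟩ < 0 and C_i(X(k), v vᵀ) = {m}. -/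

import Mathlib

open Filter Topology Matrix

lemma dot_vvT {d : ℕ} (v x y : Fin d → ℝ) :
    (Matrix.vecMulVec v v).mulVec x ⬝ᵥ y = (v ⬝ᵥ x) * (v ⬝ᵥ y) := by
  simp [Matrix.mulVec, Matrix.vecMulVec_apply, dotProduct, Finset.sum_mul, Finset.mul_sum]
  ring_nf
  congr 1; ext i; congr 1; ext j; ring

open Classical in
lemma filter_singleton_of_pos {n : ℕ} (q : Fin n → ℝ) (c : ℝ) (hc : 0 < c)
    (M : Fin n) (hM : ∀ j, j ≠ M → q j < q M) :
    (Finset.univ.filter fun j : Fin n => ∀ ℓ, c * q ℓ ≤ c * q j) = {M} := by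
  ext j
  simp only [Finset.mem_filter, Finset.mem_univ, true_and, Finset.mem_singleton]
  constructor
  · intro h
    by_contra hj
    have h1 := h M
    have h2 := hM j hj
    nlinarith
  · rintro rfl ℓ
    rcases eq_or_ne ℓ j with rfl | hℓ
    · exact le_refl _
    · exact mul_le_mul_of_nonneg_left (hM ℓ hℓ).le hc.le

open Classical in
lemma filter_singleton_of_neg {n : ℕ} (q : Fin n → ℝ) (c : ℝ) (hc : c < 0)
    (m : Fin n) (hm : ∀ j, j ≠ m → q m < q j) :
    (Finset.univ.filter fun j : Fin n => ∀ ℓ, c * q ℓ ≤ c * q j) = {m} := by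
  ext j
  simp only [Finset.mem_filter, Finset.mem_univ, true_and, Finset.mem_singleton]
  constructor
  · intro h
    by_contra hj
    have h1 := h m
    have h2 := hm j hj
    nlinarith
  · rintro rfl ℓ
    rcases eq_or_ne ℓ j with rfl | hℓ
    · exact le_refl _
    · nlinarith [hm ℓ hℓ]


open Classical in
/-- Hardmax cluster set: indices `j` where `⟨A x_i, x_j⟩` attains its maximum over the tuple. -/
noncomputable def cluster {d n : ℕ} (X : Fin n → (Fin d → ℝ))
    (A : Matrix (Fin d) (Fin d) ℝ) (i : Fin n) : Finset (Fin n) :=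
  Finset.univ.filter fun j => ∀ ℓ, A.mulVec (X i) ⬝ᵥ X ℓ ≤ A.mulVec (X i) ⬝ᵥ X j

/-- Hardmax self-attention dynamics:
`x_i(k+1) = (1−γ) x_i(k) + (γ/|C_i(X(k),A)|) Σ_{ℓ ∈ C_i(X(k),A)} x_ℓ(k)`. -/
noncomputable def traj {d n : ℕ} (γ : ℝ) (A : Matrix (Fin d) (Fin d) ℝ)
    (X0 : Fin n → (Fin d → ℝ)) : ℕ → Fin n → (Fin d → ℝ)
  | 0 => X0
  | k + 1 => fun i =>
      (1 - γ) • traj γ A X0 k i +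
        (γ / ((cluster (traj γ A X0 k) A i).card : ℝ)) •
          ∑ ℓ ∈ cluster (traj γ A X0 k) A i, traj γ A X0 k ℓ

/-- **Invariants of rank-one hardmax self-attention dynamics** (`A = v vᵀ`, `γ ∈ (0,1)`):
for every step `k`, tokens with initially positive projection onto `v` keep a projection in
`(0, ⟨v, x_M(0)⟩]` and their cluster set is `{M}`; symmetrically for negative projections. -/
theorem rank_one_invariants {d n : ℕ}
    (X0 : Fin n → (Fin d → ℝ)) (v : Fin d → ℝ)
    (hv : ∀ i, v ⬝ᵥ X0 i ≠ 0)
    (M m : Fin n)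
    (hM : ∀ j, j ≠ M → v ⬝ᵥ X0 j < v ⬝ᵥ X0 M)
    (hm : ∀ j, j ≠ m → v ⬝ᵥ X0 m < v ⬝ᵥ X0 j)
    (γ : ℝ) (hγ0 : 0 < γ) (hγ1 : γ < 1) :
    ∀ k : ℕ, ∀ i,
      (0 < v ⬝ᵥ X0 i →
        0 < v ⬝ᵥ traj γ (Matrix.vecMulVec v v) X0 k i ∧
        v ⬝ᵥ traj γ (Matrix.vecMulVec v v) X0 k i ≤ v ⬝ᵥ X0 M ∧
        cluster (traj γ (Matrix.vecMulVec v v) X0 k) (Matrix.vecMulVec v v) i = {M}) ∧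
      (v ⬝ᵥ X0 i < 0 →
        v ⬝ᵥ X0 m ≤ v ⬝ᵥ traj γ (Matrix.vecMulVec v v) X0 k i ∧
        v ⬝ᵥ traj γ (Matrix.vecMulVec v v) X0 k i < 0 ∧
        cluster (traj γ (Matrix.vecMulVec v v) X0 k) (Matrix.vecMulVec v v) i = {m}) := by
  set A := Matrix.vecMulVec v v with hA
  set p : ℕ → Fin n → ℝ := fun k i => v ⬝ᵥ traj γ A X0 k i with hp
  have hp0 : ∀ i, p 0 i = v ⬝ᵥ X0 i := fun i => rfl
  -- cluster rewritten in terms of p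
  have hclus : ∀ k i, cluster (traj γ A X0 k) A i =
      Finset.univ.filter fun j => ∀ ℓ, p k i * p k ℓ ≤ p k i * p k j := by
    intro k i
    unfold cluster
    congr 1
    ext j
    simp only [hA, dot_vvT]
    rfl
  have le_M : ∀ i, v ⬝ᵥ X0 i ≤ v ⬝ᵥ X0 M := by
    intro i
    rcases eq_or_ne i M with rfl | h
    · exact le_refl _
    · exact (hM i h).le
  have m_le : ∀ i, v ⬝ᵥ X0 m ≤ v ⬝ᵥ X0 i := by
    intro i
    rcases eq_or_ne i m with rfl | h
    · exact le_refl _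
    · exact (hm i h).le
  -- cluster singleton for positive/negative p k i, given strict max/min at step k
  have clusP : ∀ k i, 0 < p k i → (∀ j, j ≠ M → p k j < p k M) →
      cluster (traj γ A X0 k) A i = {M} := by
    intro k i hpos hmax
    rw [hclus]
    exact filter_singleton_of_pos _ _ hpos _ hmax
  have clusN : ∀ k i, p k i < 0 → (∀ j, j ≠ m → p k m < p k j) →
      cluster (traj γ A X0 k) A i = {m} := by
    intro k i hneg hmin
    rw [hclus]
    exact filter_singleton_of_neg _ _ hneg _ hmin
  -- update formula when cluster is a singleton
  have step : ∀ k i (j0 : Fin n), cluster (traj γ A X0 k) A i = {j0} →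
      p (k + 1) i = (1 - γ) * p k i + γ * p k j0 := by
    intro k i j0 h
    show v ⬝ᵥ ((1 - γ) • traj γ A X0 k i +
        (γ / ((cluster (traj γ A X0 k) A i).card : ℝ)) •
          ∑ ℓ ∈ cluster (traj γ A X0 k) A i, traj γ A X0 k ℓ) = _
    rw [h]
    simp [dotProduct_add, dotProduct_smul, smul_eq_mul]
    rfl
  -- the main invariant, by induction
  have key : ∀ k : ℕ,
      (∀ j, j ≠ M → p k j < p k M) ∧ (∀ j, j ≠ m → p k m < p k j) ∧
      (∀ i, 0 < v ⬝ᵥ X0 i → 0 < p k i ∧ p k i ≤ v ⬝ᵥ X0 M) ∧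
      (∀ i, v ⬝ᵥ X0 i < 0 → v ⬝ᵥ X0 m ≤ p k i ∧ p k i < 0) := by
    intro k
    induction k with
    | zero =>
      refine ⟨hM, hm, fun i h => ⟨h, le_M i⟩, fun i h => ⟨m_le i, h⟩⟩
    | succ k ih =>
      obtain ⟨S1, S2, S3, S4⟩ := ih
      have hMpos : ∀ i, 0 < v ⬝ᵥ X0 i → 0 < v ⬝ᵥ X0 M :=
        fun i h => lt_of_lt_of_le h (le_M i)
      have hmneg : ∀ i, v ⬝ᵥ X0 i < 0 → v ⬝ᵥ X0 m < 0 :=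
        fun i h => lt_of_le_of_lt (m_le i) h
      have stepP : ∀ i, 0 < v ⬝ᵥ X0 i →
          p (k + 1) i = (1 - γ) * p k i + γ * p k M := by
        intro i h
        exact step k i M (clusP k i (S3 i h).1 S1)
      have stepN : ∀ i, v ⬝ᵥ X0 i < 0 →
          p (k + 1) i = (1 - γ) * p k i + γ * p k m := by
        intro i h
        exact step k i m (clusN k i (S4 i h).2 S2)
      have S3' : ∀ i, 0 < v ⬝ᵥ X0 i → 0 < p (k + 1) i ∧ p (k + 1) i ≤ v ⬝ᵥ X0 M := by
        intro i h
        have hM0 := hMpos i h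
        obtain ⟨h1, h2⟩ := S3 i h
        obtain ⟨h3, h4⟩ := S3 M hM0
        rw [stepP i h]
        constructor <;> nlinarith
      have S4' : ∀ i, v ⬝ᵥ X0 i < 0 → v ⬝ᵥ X0 m ≤ p (k + 1) i ∧ p (k + 1) i < 0 := by
        intro i h
        have hm0 := hmneg i h
        obtain ⟨h1, h2⟩ := S4 i h
        obtain ⟨h3, h4⟩ := S4 m hm0
        rw [stepN i h]
        constructor <;> nlinarith
      have S1' : ∀ j, j ≠ M → p (k + 1) j < p (k + 1) M := by
        intro j hj
        rcases (hv j).lt_or_gt with hjneg | hjpos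
        · rcases (hv M).lt_or_gt with hMneg | hMpos'
          · rw [stepN j hjneg, stepN M hMneg]
            have := S1 j hj
            nlinarith
          · have := (S4' j hjneg).2
            have := (S3' M hMpos').1
            linarith
        · have hM0 := hMpos j hjpos
          rw [stepP j hjpos, stepP M hM0]
          have := S1 j hj
          nlinarith
      have S2' : ∀ j, j ≠ m → p (k + 1) m < p (k + 1) j := by
        intro j hj
        rcases (hv j).lt_or_gt with hjneg | hjpos
        · have hm0 := hmneg j hjneg
          rw [stepN j hjneg, stepN m hm0]
          have := S2 j hj
          nlinarith
        · rcases (hv m).lt_or_gt with hmneg' | hmpos'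
          · have := (S4' m hmneg').2
            have := (S3' j hjpos).1
            linarith
          · rw [stepP j hjpos, stepP m hmpos']
            have := S2 j hj
            nlinarith
      exact ⟨S1', S2', S3', S4'⟩
  intro k i
  obtain ⟨S1, S2, S3, S4⟩ := key k
  constructor
  · intro h
    exact ⟨(S3 i h).1, (S3 i h).2, clusP k i (S3 i h).1 S1⟩
  · intro h
    exact ⟨(S4 i h).1, (S4 i h).2, clusN k i (S4 i h).2 S2⟩
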